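/- Let f: ℝⁿ → ℝ be bounded from below, let α ∈ (0,1), and let {x_k} and {g_k} be sequences in ℝⁿ satisfying f(x_{k+1}) ≤ f(x_k) − α·‖x_{k+1} − x_k‖·‖g_k‖ for all k. If {x_k} has an accumulation point x̄, then either (a) x_k converges to x̄, or (b) liminf_{k→∞} max{‖x_k − x̄‖, ‖g_k‖} = 0. -/

import Mathlib

open Filter Topology Set

theorem descent_accumulation_dichotomy {n : ℕ}
    (f : EuclideanSpace ℝ (Fin n) → ℝ) (hbdd : BddBelow (Set.range f))
    (α : ℝ) (hα : α ∈ Set.Ioo (0 : ℝ) 1)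
    (x g : ℕ → EuclideanSpace ℝ (Fin n))
    (hdesc : ∀ k, f (x (k + 1)) ≤ f (x k) - α * ‖x (k + 1) - x k‖ * ‖g k‖)
    (xbar : EuclideanSpace ℝ (Fin n))
    (hacc : ∃ φ : ℕ → ℕ, StrictMono φ ∧ Tendsto (fun j => x (φ j)) atTop (𝓝 xbar)) :
    Tendsto x atTop (𝓝 xbar) ∨
      Filter.liminf (fun k => max ‖x k - xbar‖ ‖g k‖) atTop = 0 := by
  obtain ⟨φ, hφ, hφlim⟩ := hacc
  obtain ⟨B, hB⟩ := hbdd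
  obtain ⟨hα0, hα1⟩ := hα
  set u : ℕ → ℝ := fun k => ‖x (k + 1) - x k‖ * ‖g k‖ with hudef
  have hunn : ∀ k, 0 ≤ u k := fun k => mul_nonneg (norm_nonneg _) (norm_nonneg _)
  have hsum : Summable u := by
    apply summable_of_sum_range_le hunn (c := (f (x 0) - B) / α)
    intro m
    rw [le_div_iff₀ hα0]
    have h1 : (∑ k ∈ Finset.range m, u k) * α ≤ f (x 0) - f (x m) := by
      induction m with
      | zero => simp
      | succ m ih =>
        rw [Finset.sum_range_succ, add_mul]
        have h2 := hdesc m
        have : α * ‖x (m + 1) - x m‖ * ‖g m‖ = u m * α := by ring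
        rw [this] at h2
        linarith
    have h3 : B ≤ f (x m) := hB ⟨x m, rfl⟩
    linarith
  by_cases h0 : Filter.liminf (fun k => max ‖x k - xbar‖ ‖g k‖) atTop = 0
  · exact Or.inr h0
  left
  -- extract ε > 0 and N with eventual lower bound
  set v : ℕ → ℝ := fun k => max ‖x k - xbar‖ ‖g k‖ with hvdef
  have hvnn : ∀ k, 0 ≤ v k := fun k => le_trans (norm_nonneg _) (le_max_left _ _)
  have hlim : Filter.liminf v atTop = sSup {a | ∀ᶠ k in atTop, a ≤ v k} :=
    Filter.liminf_eq
  have h0S : (0 : ℝ) ∈ {a | ∀ᶠ k in atTop, a ≤ v k} :=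
    Filter.Eventually.of_forall hvnn
  have hSbdd : BddAbove {a | ∀ᶠ k in atTop, a ≤ v k} := by
    by_contra hc
    exact h0 (hlim.trans (Real.sSup_of_not_bddAbove hc))
  have hLpos : 0 < Filter.liminf v atTop := by
    rcases lt_or_eq_of_le (hlim ▸ le_csSup hSbdd h0S) with h | h
    · exact h
    · exact absurd h.symm h0
  set L := Filter.liminf v atTop with hLdef
  have hεS : (L / 2) ∈ {a | ∀ᶠ k in atTop, a ≤ v k} := by
    obtain ⟨b, hbS, hb⟩ := exists_lt_of_lt_csSup ⟨0, h0S⟩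
      (show L / 2 < sSup {a | ∀ᶠ k in atTop, a ≤ v k} from hlim ▸ half_lt_self hLpos)
    exact hbS.mono fun k hk => le_trans hb.le hk
  set ε := L / 2 with hεdef
  have hεpos : 0 < ε := half_pos hLpos
  obtain ⟨N, hN⟩ := (eventually_atTop).1 hεS
  -- now prove convergence
  rw [Metric.tendsto_atTop]
  intro δ hδ
  set δ' := min δ ε with hδ'def
  have hδ'pos : 0 < δ' := lt_min hδ hεpos
  have hδ'ε : δ' ≤ ε := min_le_right _ _
  -- choose K with small tail and K ≥ N
  have htail : Tendsto (fun i => ∑' k, u (k + i)) atTop (𝓝 0) := tendsto_sum_nat_add u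
  have h1 : ∀ᶠ i in atTop, ∑' k, u (k + i) < ε * δ' / 2 :=
    htail.eventually (eventually_lt_nhds (show (0:ℝ) < ε * δ' / 2 by positivity))
  obtain ⟨K, hKtail, hKN⟩ := ((h1.and (eventually_ge_atTop N)).exists)
  -- choose the index along the subsequence
  have h2 : ∀ᶠ j in atTop, dist (x (φ j)) xbar < δ' / 2 :=
    hφlim (Metric.ball_mem_nhds xbar (by positivity))
  obtain ⟨j, hjdist, hjK⟩ := (h2.and (eventually_ge_atTop K |>.mono
    (fun j hj => le_trans hj (hφ.le_apply)))).exists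
  rw [dist_eq_norm] at hjdist
  set M := φ j with hMdef
  -- bound on partial tail sums
  have hsumtail : Summable (fun k => u (k + K)) := (summable_nat_add_iff K).2 hsum
  have hIco : ∀ m, ∑ k ∈ Finset.Ico M m, u k ≤ ∑' k, u (k + K) := by
    intro m
    have hsub : Finset.Ico M m ⊆ Finset.Ico K m := by
      apply Finset.Ico_subset_Ico hjK le_rfl
    calc ∑ k ∈ Finset.Ico M m, u k ≤ ∑ k ∈ Finset.Ico K m, u k :=
          Finset.sum_le_sum_of_subset_of_nonneg hsub (fun k _ _ => hunn k)
      _ = ∑ i ∈ Finset.range (m - K), u (K + i) := Finset.sum_Ico_eq_sum_range _ _ _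
      _ = ∑ i ∈ Finset.range (m - K), u (i + K) := by
          simp [add_comm]
      _ ≤ ∑' k, u (k + K) := hsumtail.sum_le_tsum _ (fun i _ => hunn _)
  -- key induction
  have key : ∀ m, M ≤ m →
      ‖x m - xbar‖ ≤ ‖x M - xbar‖ + (1 / ε) * ∑ k ∈ Finset.Ico M m, u k ∧
      ‖x m - xbar‖ < δ' := by
    intro m hm
    induction m, hm using Nat.le_induction with
    | base =>
      constructor
      · simp
      · calc ‖x M - xbar‖ < δ' / 2 := hjdist
          _ < δ' := by linarith
    | succ m hm ih =>
      obtain ⟨ihb, ihlt⟩ := ih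
      have hmN : N ≤ m := le_trans hKN (le_trans hjK hm)
      have hgm : ε ≤ ‖g m‖ := by
        have := hN m hmN
        rcases le_max_iff.1 this with h | h
        · exact absurd h (not_le.2 (lt_of_lt_of_le ihlt hδ'ε))
        · exact h
      have hstep : ‖x (m + 1) - x m‖ ≤ u m / ε := by
        rw [le_div_iff₀ hεpos]
        calc ‖x (m + 1) - x m‖ * ε ≤ ‖x (m + 1) - x m‖ * ‖g m‖ :=
              mul_le_mul_of_nonneg_left hgm (norm_nonneg _)
          _ = u m := rfl
      have htri : ‖x (m + 1) - xbar‖ ≤ ‖x (m + 1) - x m‖ + ‖x m - xbar‖ := by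
        calc ‖x (m + 1) - xbar‖ = ‖(x (m + 1) - x m) + (x m - xbar)‖ := by abel_nf
          _ ≤ ‖x (m + 1) - x m‖ + ‖x m - xbar‖ := norm_add_le _ _
      have hsumsucc : ∑ k ∈ Finset.Ico M (m + 1), u k
          = ∑ k ∈ Finset.Ico M m, u k + u m := Finset.sum_Ico_succ_top hm _
      have hb : ‖x (m + 1) - xbar‖ ≤
          ‖x M - xbar‖ + (1 / ε) * ∑ k ∈ Finset.Ico M (m + 1), u k := by
        rw [hsumsucc]
        have : u m / ε = (1 / ε) * u m := by ring
        calc ‖x (m + 1) - xbar‖ ≤ ‖x (m + 1) - x m‖ + ‖x m - xbar‖ := htri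
          _ ≤ u m / ε + (‖x M - xbar‖ + (1 / ε) * ∑ k ∈ Finset.Ico M m, u k) := by
              linarith
          _ = ‖x M - xbar‖ + (1 / ε) * (∑ k ∈ Finset.Ico M m, u k + u m) := by
              ring
      refine ⟨hb, ?_⟩
      have htb : ∑ k ∈ Finset.Ico M (m + 1), u k < ε * δ' / 2 :=
        lt_of_le_of_lt (hIco (m + 1)) hKtail
      have h1ε : 0 < 1 / ε := by positivity
      calc ‖x (m + 1) - xbar‖
          ≤ ‖x M - xbar‖ + (1 / ε) * ∑ k ∈ Finset.Ico M (m + 1), u k := hb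
        _ < δ' / 2 + (1 / ε) * (ε * δ' / 2) := by
            have := mul_lt_mul_of_pos_left htb h1ε
            linarith
        _ = δ' := by field_simp; norm_num
  exact ⟨M, fun m hm => by
    rw [dist_eq_norm]
    exact lt_of_lt_of_le (key m hm).2 (min_le_left _ _)⟩
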